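/- Fix T > 0, d ≥ 1, β = (β₁,…,β_d) ∈ ℝ^d with ‖β‖_∞ = max_i |β_i|, and a d×d substochastic matrix Q with zero diagonal and Qⁿ → 0, with regulator map ψ. Suppose K ∈ (0,∞) is such that ψ is K-Lipschitz with respect to the uniform metric: for all ξ, ζ ∈ ∏_{i=1}^d D[0,T], max_i sup_{t∈[0,T]} |ψ⁽ⁱ⁾(ξ)(t) − ψ⁽ⁱ⁾(ζ)(t)| ≤ K max_i sup_{t∈[0,T]} |ξ⁽ⁱ⁾(t) − ζ⁽ⁱ⁾(t)|. Then for every ζ = (ζ⁽¹⁾,…,ζ⁽ᵈ⁾) with each ζ⁽ⁱ⁾ ∈ D^{β_i}[0,T], and every nondecreasing w : [0,T] → [0,T] with w(0) = 0 and w(T) = T, one has max_i sup_{t∈[0,T]} |ψ⁽ⁱ⁾(ζ)(w(t)) − ψ⁽ⁱ⁾(ζ)(t)| ≤ K ‖β‖_∞ sup_{t∈[0,T]} |w(t) − t|. -/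

import Mathlib

open Set Filter

noncomputable section

/-- `f` is càdlàg on `[0,T]`: right-continuous on `[0,T)` and with left limits on `(0,T]`. -/
def Cadlag (T : ℝ) (f : ℝ → ℝ) : Prop :=
  (∀ t ∈ Set.Ico (0:ℝ) T, Filter.Tendsto f (nhdsWithin t (Set.Ici t)) (nhds (f t))) ∧
  (∀ t ∈ Set.Ioc (0:ℝ) T, ∃ L : ℝ, Filter.Tendsto f (nhdsWithin t (Set.Iio t)) (nhds L))

/-- `lam` is a strictly increasing continuous bijection of `[0,T]` onto itself. -/
def IsTimeChange (T : ℝ) (lam : ℝ → ℝ) : Prop :=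
  StrictMonoOn lam (Set.Icc 0 T) ∧ ContinuousOn lam (Set.Icc 0 T) ∧
  Set.MapsTo lam (Set.Icc 0 T) (Set.Icc 0 T) ∧
  Set.SurjOn lam (Set.Icc 0 T) (Set.Icc 0 T) ∧ lam 0 = 0 ∧ lam T = T

/-- Uniform distance of two (bounded) functions over `[0,T]`. -/
def unifDist (T : ℝ) (f g : ℝ → ℝ) : ℝ :=
  sSup {r : ℝ | ∃ t ∈ Set.Icc (0:ℝ) T, r = |f t - g t|}

/-- The Skorokhod `J₁` distance on `[0,T]`. -/
def J1Dist (T : ℝ) (f g : ℝ → ℝ) : ℝ :=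
  sInf {r : ℝ | ∃ lam : ℝ → ℝ, IsTimeChange T lam ∧
    r = max (unifDist T (fun t => f (lam t)) g) (unifDist T lam id)}

/-- The product `J₁` distance on `d`-tuples of paths. -/
def prodJ1Dist (T : ℝ) {d : ℕ} (ξ ζ : Fin d → ℝ → ℝ) : ℝ :=
  ∑ i, J1Dist T (ξ i) (ζ i)

/-- A substochastic routing matrix with zero diagonal whose powers tend to zero. -/
def Substochastic {d : ℕ} (Q : Matrix (Fin d) (Fin d) ℝ) : Prop :=
  (∀ i j, 0 ≤ Q i j) ∧ (∀ i, Q i i = 0) ∧ (∀ i, ∑ j, Q i j ≤ 1) ∧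
  Filter.Tendsto (fun n : ℕ => Q ^ n) Filter.atTop (nhds 0)

/-- The reflection matrix `𝒬 = I - Qᵀ`. -/
def refMatrix {d : ℕ} (Q : Matrix (Fin d) (Fin d) ℝ) : Matrix (Fin d) (Fin d) ℝ :=
  1 - Q.transpose

/-- `ζ` belongs to the feasible regulator set `Ψ(ξ)`: each coordinate of `ζ` is a
nondecreasing càdlàg path, nonnegative at the origin, and `ξ + 𝒬 ζ ≥ 0` on `[0,T]`. -/
def Feasible (T : ℝ) {d : ℕ} (Q : Matrix (Fin d) (Fin d) ℝ)
    (ξ ζ : Fin d → ℝ → ℝ) : Prop :=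
  (∀ i, Cadlag T (ζ i) ∧ MonotoneOn (ζ i) (Set.Icc 0 T) ∧ 0 ≤ ζ i 0) ∧
  (∀ t ∈ Set.Icc (0:ℝ) T, ∀ i, 0 ≤ ξ i t + ∑ j, refMatrix Q i j * ζ j t)

/-- The regulator map `ψ`, defined coordinatewise and pointwise as the infimum of the
feasible regulator set. -/
def regulator (T : ℝ) {d : ℕ} (Q : Matrix (Fin d) (Fin d) ℝ)
    (ξ : Fin d → ℝ → ℝ) : Fin d → ℝ → ℝ :=
  fun i t => sInf {z : ℝ | ∃ ζ, Feasible T Q ξ ζ ∧ z = ζ i t}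

/-- The content map `φ(ξ) = ξ + 𝒬 ψ(ξ)`. -/
def content (T : ℝ) {d : ℕ} (Q : Matrix (Fin d) (Fin d) ℝ)
    (ξ : Fin d → ℝ → ℝ) : Fin d → ℝ → ℝ :=
  fun i t => ξ i t + ∑ j, refMatrix Q i j * regulator T Q ξ j t

/-- `D^β[0,T]`: càdlàg paths `f` with `f 0 ≥ 0` such that `t ↦ f t - β t` is nondecreasing. -/
def DBeta (T β : ℝ) (f : ℝ → ℝ) : Prop :=
  Cadlag T f ∧ 0 ≤ f 0 ∧ MonotoneOn (fun t => f t - β * t) (Set.Icc 0 T)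

/-- `max_i sup_{t ∈ [0,T]} |ξ⁽ⁱ⁾(t) - ζ⁽ⁱ⁾(t)|`, the uniform distance of tuples of paths. -/
def supDistTuple (T : ℝ) {d : ℕ} (ξ ζ : Fin d → ℝ → ℝ) : ℝ :=
  sSup {r : ℝ | ∃ i : Fin d, ∃ t ∈ Set.Icc (0:ℝ) T, r = |ξ i t - ζ i t|}

/-- `sup_{t ∈ [0,T]} |w(t) - t|`, the uniform deviation of a time deformation from identity. -/
def supTimeDev (T : ℝ) (w : ℝ → ℝ) : ℝ :=
  sSup {r : ℝ | ∃ t ∈ Set.Icc (0:ℝ) T, r = |w t - t|}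


section AuxLemmas

open Set Filter

/-! ### Auxiliary matrix lemmas -/

lemma pow_entry_nonneg {d : ℕ} {Q : Matrix (Fin d) (Fin d) ℝ} (hQ : ∀ i j, 0 ≤ Q i j) :
    ∀ (n : ℕ) (i j : Fin d), 0 ≤ (Q ^ n) i j := by
  intro n
  induction n with
  | zero => intro i j; rw [pow_zero]; by_cases h : i = j <;> simp [Matrix.one_apply, h]
  | succ n ih =>
      intro i j
      rw [pow_succ, Matrix.mul_apply]
      exact Finset.sum_nonneg fun k _ => mul_nonneg (ih i k) (hQ k j)

lemma exists_dom {d : ℕ} (hd : 0 < d) {Q : Matrix (Fin d) (Fin d) ℝ}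
    (hpos : ∀ i j, 0 ≤ Q i j)
    (htend : Filter.Tendsto (fun n : ℕ => Q ^ n) Filter.atTop (nhds 0)) :
    ∃ v : Fin d → ℝ, (∀ j, 0 ≤ v j) ∧ ∀ i, 1 ≤ v i - ∑ j, Q j i * v j := by
  have hd2 : (0:ℝ) < 1 / (2 * d) := by positivity
  have hev : ∀ᶠ n in atTop, ∀ i j : Fin d, (Q ^ n) i j < 1 / (2 * d) := by
    rw [eventually_all]; intro i; rw [eventually_all]; intro j
    have h1 : Tendsto (fun n => (Q ^ n) i j) atTop (nhds 0) := by
      have := (tendsto_pi_nhds.1 ((tendsto_pi_nhds.1 htend) i)) j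
      simpa using this
    exact h1.eventually_lt_const hd2
  obtain ⟨n, hn⟩ := hev.exists
  refine ⟨fun j => 2 * ∑ m ∈ Finset.range n, ∑ k, (Q ^ m) k j, ?_, ?_⟩
  · intro j
    have : 0 ≤ ∑ m ∈ Finset.range n, ∑ k, (Q ^ m) k j :=
      Finset.sum_nonneg fun m _ => Finset.sum_nonneg fun k _ => pow_entry_nonneg hpos m k j
    dsimp only
    linarith
  · intro i
    have key : ∑ j, Q j i * (2 * ∑ m ∈ Finset.range n, ∑ k, (Q ^ m) k j)
        = 2 * ∑ m ∈ Finset.range n, ∑ k, (Q ^ (m+1)) k i := by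
      have h1 : ∀ m, ∑ k, (Q ^ (m+1)) k i = ∑ j, Q j i * ∑ k, (Q ^ m) k j := by
        intro m
        have : ∀ k, (Q ^ (m+1)) k i = ∑ j, (Q ^ m) k j * Q j i := by
          intro k; rw [pow_succ, Matrix.mul_apply]
        simp only [this]
        rw [Finset.sum_comm]
        congr 1; ext j
        rw [Finset.mul_sum]
        congr 1; ext k; ring
      simp only [h1, Finset.mul_sum]
      rw [Finset.sum_comm]
      refine Finset.sum_congr rfl fun x _ => ?_
      refine Finset.sum_congr rfl fun k _ => ?_
      refine Finset.sum_congr rfl fun k' _ => ?_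
      ring
    rw [key]
    have htel : ∑ m ∈ Finset.range n, (∑ k, (Q ^ m) k i - ∑ k, (Q ^ (m+1)) k i)
        = ∑ k, (Q ^ 0) k i - ∑ k, (Q ^ n) k i :=
      Finset.sum_range_sub' (fun m => ∑ k, (Q ^ m) k i) n
    have h0 : ∑ k, (Q ^ 0) k i = 1 := by
      simp [pow_zero, Matrix.one_apply]
    have hcol : ∑ k, (Q ^ n) k i ≤ 1/2 := by
      have h2 : ∑ k, (Q ^ n) k i ≤ ∑ _k : Fin d, (1 / (2 * (d:ℝ))) :=
        Finset.sum_le_sum fun k _ => (hn k i).le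
      rw [Finset.sum_const, Finset.card_univ, Fintype.card_fin, nsmul_eq_mul] at h2
      have hd' : (d:ℝ) ≠ 0 := by positivity
      calc ∑ k, (Q ^ n) k i ≤ (d:ℝ) * (1 / (2 * d)) := h2
        _ = 1/2 := by field_simp
    have hsplit : 2 * ∑ m ∈ Finset.range n, ∑ k, (Q ^ m) k i
        - 2 * ∑ m ∈ Finset.range n, ∑ k, (Q ^ (m+1)) k i
        = 2 * (∑ k, (Q ^ 0) k i - ∑ k, (Q ^ n) k i) := by
      rw [← htel, Finset.sum_sub_distrib]; ring
    rw [h0] at hsplit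
    dsimp only
    linarith

/-! ### The time-compression map `ρ` -/

section rho
variable (t1 t2 : ℝ)

noncomputable def rho (u : ℝ) : ℝ := min u t1 + max (u - t2) 0

lemma rho_mono : Monotone (rho t1 t2) := by
  have h1 : Monotone (fun u : ℝ => u - t2) := fun a b hab => by simpa using sub_le_sub_right hab t2
  exact (monotone_id.min monotone_const).add (h1.max monotone_const)

lemma rho_cont : Continuous (rho t1 t2) :=
  (continuous_id.min continuous_const).add
    ((continuous_id.sub continuous_const).max continuous_const)

variable {t1 t2}

lemma rho_nonneg (h01 : 0 ≤ t1) {u : ℝ} (hu : 0 ≤ u) : 0 ≤ rho t1 t2 u :=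
  add_nonneg (le_min hu h01) (le_max_right _ 0)

lemma rho_le (h12 : t1 ≤ t2) (u : ℝ) : rho t1 t2 u ≤ u := by
  rcases le_total u t2 with h | h
  · have : max (u - t2) 0 = 0 := max_eq_right (by linarith)
    rw [rho, this, add_zero]; exact min_le_left _ _
  · have : max (u - t2) 0 = u - t2 := max_eq_left (by linarith)
    rw [rho, this]
    have := min_le_right u t1
    linarith

lemma rho_zero (h01 : 0 ≤ t1) (h02 : 0 ≤ t2) : rho t1 t2 0 = 0 := by
  rw [rho, min_eq_left h01, max_eq_right (by linarith)]; ring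

lemma rho_t2 (h12 : t1 ≤ t2) : rho t1 t2 t2 = t1 := by
  rw [rho, min_eq_right h12, sub_self, max_self, add_zero]

lemma sub_rho (u : ℝ) : u - rho t1 t2 u = min u t2 - min u t1 := by
  rcases le_total u t2 with h | h
  · rw [rho, max_eq_right (by linarith), min_eq_left h]; ring
  · rw [rho, max_eq_left (by linarith), min_eq_right h]; ring

lemma cadlag_comp_rho {T : ℝ} (h01 : 0 ≤ t1) (h12 : t1 ≤ t2) (_h2T : t2 ≤ T)
    {f : ℝ → ℝ} (hf : Cadlag T f) : Cadlag T (fun u => f (rho t1 t2 u)) := by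
  constructor
  · intro t ht
    have hs : rho t1 t2 t ∈ Set.Ico (0:ℝ) T :=
      ⟨rho_nonneg h01 ht.1, lt_of_le_of_lt (rho_le h12 t) ht.2⟩
    have hfr := hf.1 _ hs
    have hmap : MapsTo (rho t1 t2) (Ici t) (Ici (rho t1 t2 t)) := fun u hu => rho_mono t1 t2 hu
    have hten : Tendsto (rho t1 t2) (nhdsWithin t (Ici t))
        (nhdsWithin (rho t1 t2 t) (Ici (rho t1 t2 t))) :=
      ((rho_cont t1 t2).continuousWithinAt).tendsto_nhdsWithin hmap
    exact hfr.comp hten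
  · intro t ht
    rcases le_or_gt t t1 with h | h
    · obtain ⟨L, hL⟩ := hf.2 t ht
      refine ⟨L, hL.congr' ?_⟩
      refine Filter.eventuallyEq_of_mem self_mem_nhdsWithin fun u hu => ?_
      have hu' : u < t := hu
      have : rho t1 t2 u = u := by
        rw [rho, min_eq_left (by linarith), max_eq_right (by linarith)]; ring
      simp [this]
    rcases le_or_gt t t2 with h2 | h2
    · refine ⟨f t1, tendsto_const_nhds.congr' ?_⟩
      have hmem : Ioi t1 ∩ Iio t ∈ nhdsWithin t (Iio t) :=
        inter_mem (mem_nhdsWithin_of_mem_nhds (isOpen_Ioi.mem_nhds h)) self_mem_nhdsWithin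
      refine Filter.eventuallyEq_of_mem hmem fun u hu => ?_
      have h3 : t1 < u := hu.1
      have h4 : u < t := hu.2
      have : rho t1 t2 u = t1 := by
        rw [rho, min_eq_right (by linarith), max_eq_right (by linarith)]; ring
      simp [this]
    · obtain ⟨L, hL⟩ := hf.2 (t - (t2 - t1)) ⟨by linarith, by linarith [ht.2]⟩
      refine ⟨L, ?_⟩
      have hmap : MapsTo (fun u : ℝ => u - (t2 - t1)) (Iio t) (Iio (t - (t2 - t1))) :=
        fun u hu => by simp only [mem_Iio] at *; linarith
      have hten : Tendsto (fun u : ℝ => u - (t2 - t1)) (nhdsWithin t (Iio t))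
          (nhdsWithin (t - (t2 - t1)) (Iio (t - (t2 - t1)))) :=
        ((continuous_sub_right _).continuousWithinAt).tendsto_nhdsWithin hmap
      refine (hL.comp hten).congr' ?_
      have hmem : Ioi t2 ∈ nhdsWithin t (Iio t) :=
        mem_nhdsWithin_of_mem_nhds (isOpen_Ioi.mem_nhds h2)
      refine Filter.eventuallyEq_of_mem hmem fun u hu => ?_
      have h3 : t2 < u := hu
      have : rho t1 t2 u = u - (t2 - t1) := by
        rw [rho, min_eq_right (by linarith), max_eq_left (by linarith)]; ring
      simp [this]

end rho

/-! ### Basic regulator lemmas -/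

lemma feasible_val_nonneg {T : ℝ} {d : ℕ} {Q : Matrix (Fin d) (Fin d) ℝ}
    {ξ ζ' : Fin d → ℝ → ℝ} (hf : Feasible T Q ξ ζ') (i : Fin d) {t : ℝ}
    (ht : t ∈ Set.Icc (0:ℝ) T) : 0 ≤ ζ' i t :=
  le_trans (hf.1 i).2.2 ((hf.1 i).2.1 ⟨le_rfl, ht.1.trans ht.2⟩ ht ht.1)

lemma reg_bddBelow {T : ℝ} {d : ℕ} {Q : Matrix (Fin d) (Fin d) ℝ}
    (ξ : Fin d → ℝ → ℝ) (i : Fin d) {t : ℝ} (ht : t ∈ Set.Icc (0:ℝ) T) :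
    BddBelow {z : ℝ | ∃ ζ', Feasible T Q ξ ζ' ∧ z = ζ' i t} := by
  refine ⟨0, ?_⟩
  rintro z ⟨ζ', hf, rfl⟩
  exact feasible_val_nonneg hf i ht

lemma reg_le_feasible {T : ℝ} {d : ℕ} {Q : Matrix (Fin d) (Fin d) ℝ}
    {ξ ζ' : Fin d → ℝ → ℝ} (hf : Feasible T Q ξ ζ') (i : Fin d) {t : ℝ}
    (ht : t ∈ Set.Icc (0:ℝ) T) : regulator T Q ξ i t ≤ ζ' i t :=
  csInf_le (reg_bddBelow ξ i ht) ⟨ζ', hf, rfl⟩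

lemma reg_nonneg {T : ℝ} {d : ℕ} {Q : Matrix (Fin d) (Fin d) ℝ}
    (ξ : Fin d → ℝ → ℝ) (i : Fin d) {t : ℝ} (ht : t ∈ Set.Icc (0:ℝ) T) :
    0 ≤ regulator T Q ξ i t := by
  apply Real.sInf_nonneg
  rintro z ⟨ζ', hf, rfl⟩
  exact feasible_val_nonneg hf i ht

lemma reg_mono {T : ℝ} {d : ℕ} {Q : Matrix (Fin d) (Fin d) ℝ}
    {ξ ζ0 : Fin d → ℝ → ℝ} (hf0 : Feasible T Q ξ ζ0) (i : Fin d) {t1 t2 : ℝ}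
    (h1 : t1 ∈ Set.Icc (0:ℝ) T) (h2 : t2 ∈ Set.Icc (0:ℝ) T) (h12 : t1 ≤ t2) :
    regulator T Q ξ i t1 ≤ regulator T Q ξ i t2 := by
  refine le_csInf ⟨ζ0 i t2, ζ0, hf0, rfl⟩ ?_
  rintro b ⟨ζ', hf', rfl⟩
  exact (reg_le_feasible hf' i h1).trans ((hf'.1 i).2.1 h1 h2 h12)

lemma const_feasible {T : ℝ} {d : ℕ} {Q : Matrix (Fin d) (Fin d) ℝ}
    (v : Fin d → ℝ) (hv0 : ∀ j, 0 ≤ v j) (hv1 : ∀ i, 1 ≤ v i - ∑ j, Q j i * v j)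
    {ξ : Fin d → ℝ → ℝ} {M : ℝ} (hM : 0 ≤ M)
    (hlb : ∀ i, ∀ t ∈ Set.Icc (0:ℝ) T, -M ≤ ξ i t) :
    Feasible T Q ξ (fun j _ => M * v j) := by
  constructor
  · intro j
    exact ⟨⟨fun t _ => tendsto_const_nhds, fun t _ => ⟨M * v j, tendsto_const_nhds⟩⟩,
      fun a _ b _ _ => le_rfl, mul_nonneg hM (hv0 j)⟩
  · intro t ht i
    have hsum : ∑ j, refMatrix Q i j * (M * v j) = M * (v i - ∑ j, Q j i * v j) := by
      simp only [refMatrix, Matrix.sub_apply, Matrix.transpose_apply, Matrix.one_apply, sub_mul]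
      rw [Finset.sum_sub_distrib]
      have h1 : ∑ j, (if i = j then (1:ℝ) else 0) * (M * v j) = M * v i := by
        simp
      have h2 : ∑ j, Q j i * (M * v j) = M * ∑ j, Q j i * v j := by
        rw [Finset.mul_sum]
        exact Finset.sum_congr rfl fun j _ => by ring
      rw [h1, h2]; ring
    have h3 : M * 1 ≤ M * (v i - ∑ j, Q j i * v j) := mul_le_mul_of_nonneg_left (hv1 i) hM
    have h4 := hlb i t ht
    rw [hsum]
    linarith

/-! ### The key increment bound -/

lemma reg_increment
    {T : ℝ} (hT : 0 < T) {d : ℕ} {β : Fin d → ℝ} {Q : Matrix (Fin d) (Fin d) ℝ}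
    (v : Fin d → ℝ) (hv0 : ∀ j, 0 ≤ v j) (hv1 : ∀ i, 1 ≤ v i - ∑ j, Q j i * v j)
    {K B : ℝ} (hK : 0 < K) (hB0 : 0 ≤ B) (hB : ∀ i, |β i| ≤ B)
    (hLip : ∀ ξ ζ : Fin d → ℝ → ℝ, (∀ i, Cadlag T (ξ i)) → (∀ i, Cadlag T (ζ i)) →
      supDistTuple T (regulator T Q ξ) (regulator T Q ζ) ≤ K * supDistTuple T ξ ζ)
    {ζ : Fin d → ℝ → ℝ} (hζ : ∀ i, DBeta T (β i) (ζ i))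
    (i : Fin d) {t1 t2 : ℝ} (h01 : 0 ≤ t1) (h12 : t1 ≤ t2) (h2T : t2 ≤ T) :
    regulator T Q ζ i t2 ≤ regulator T Q ζ i t1 + K * (B * (t2 - t1)) := by
  have h02 : 0 ≤ t2 := h01.trans h12
  set δ : ℝ → ℝ := fun u => min u t2 - min u t1 with hδdef
  set ξ : Fin d → ℝ → ℝ := fun j u => ζ j u + |β j| * δ u with hξdef
  have hδ0 : ∀ u, 0 ≤ δ u := fun u => sub_nonneg.2 (min_le_min le_rfl h12)
  have hδh : ∀ u, δ u ≤ t2 - t1 := by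
    intro u
    rcases le_total u t1 with h | h
    · simp only [hδdef]; rw [min_eq_left (h.trans h12), min_eq_left h]; linarith
    rcases le_total u t2 with h' | h'
    · simp only [hδdef]; rw [min_eq_left h', min_eq_right h]; linarith
    · simp only [hδdef]; rw [min_eq_right h', min_eq_right h]
  have hδcont : Continuous δ :=
    (continuous_id.min continuous_const).sub (continuous_id.min continuous_const)
  have hζcad : ∀ j, Cadlag T (ζ j) := fun j => (hζ j).1
  have hξcad : ∀ j, Cadlag T (ξ j) := by
    intro j
    constructor
    · intro t ht
      have h1 := (hζ j).1.1 t ht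
      have h2 : Tendsto (fun u => |β j| * δ u) (nhdsWithin t (Ici t)) (nhds (|β j| * δ t)) :=
        ((continuous_const.mul hδcont).tendsto t).mono_left nhdsWithin_le_nhds
      exact h1.add h2
    · intro t ht
      obtain ⟨L, hL⟩ := (hζ j).1.2 t ht
      exact ⟨L + |β j| * δ t,
        hL.add (((continuous_const.mul hδcont).tendsto t).mono_left nhdsWithin_le_nhds)⟩
  have hζlb : ∀ j, ∀ u ∈ Set.Icc (0:ℝ) T, -(B * T) ≤ ζ j u := by
    intro j u hu
    have h1 : ζ j 0 - β j * 0 ≤ ζ j u - β j * u := (hζ j).2.2 ⟨le_rfl, hT.le⟩ hu hu.1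
    have h2 : 0 ≤ ζ j 0 := (hζ j).2.1
    have h3 : -|β j| ≤ β j := neg_abs_le _
    have h4 : |β j| * u ≤ B * T := mul_le_mul (hB j) hu.2 hu.1 hB0
    nlinarith [mul_le_mul_of_nonneg_right h3 hu.1]
  have hξlb : ∀ j, ∀ u ∈ Set.Icc (0:ℝ) T, -(B * T) ≤ ξ j u := by
    intro j u hu
    have h5 := hζlb j u hu
    have h6 := mul_nonneg (abs_nonneg (β j)) (hδ0 u)
    simp only [hξdef]; linarith
  have hMT : 0 ≤ B * T := mul_nonneg hB0 hT.le
  have Fz : Feasible T Q ζ (fun j _ => (B*T) * v j) := const_feasible v hv0 hv1 hMT hζlb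
  have Fx : Feasible T Q ξ (fun j _ => (B*T) * v j) := const_feasible v hv0 hv1 hMT hξlb
  have ht2 : t2 ∈ Set.Icc (0:ℝ) T := ⟨h02, h2T⟩
  have step1 : regulator T Q ξ i t2 ≤ regulator T Q ζ i t1 := by
    refine le_csInf ⟨(B*T) * v i, fun j _ => (B*T) * v j, Fz, rfl⟩ ?_
    rintro b ⟨ζ', hf', rfl⟩
    have hmaps : MapsTo (rho t1 t2) (Set.Icc 0 T) (Set.Icc 0 T) := fun u hu =>
      ⟨rho_nonneg h01 hu.1, (rho_le h12 u).trans hu.2⟩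
    have hcomp : Feasible T Q ξ (fun j u => ζ' j (rho t1 t2 u)) := by
      constructor
      · intro j
        refine ⟨cadlag_comp_rho h01 h12 h2T (hf'.1 j).1, ?_, ?_⟩
        · exact fun a ha b hb hab => (hf'.1 j).2.1 (hmaps ha) (hmaps hb) (rho_mono t1 t2 hab)
        · show 0 ≤ ζ' j (rho t1 t2 0)
          rw [rho_zero h01 h02]
          exact (hf'.1 j).2.2
      · intro u hu j
        have hρu := hmaps hu
        have hc := hf'.2 _ hρu j
        have hg := (hζ j).2.2 ⟨rho_nonneg h01 hu.1, (rho_le h12 u).trans hu.2⟩ hu (rho_le h12 u)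
        have hδρ : u - rho t1 t2 u = δ u := sub_rho u
        have habs : 0 ≤ (β j + |β j|) * δ u :=
          mul_nonneg (by linarith [neg_abs_le (β j)]) (hδ0 u)
        have h5 : β j * (u - rho t1 t2 u) = β j * δ u := by rw [hδρ]
        have hξge : ζ j (rho t1 t2 u) ≤ ξ j u := by
          simp only [hξdef]
          dsimp only at hg ⊢
          nlinarith [hg, habs, h5]
        dsimp only
        linarith [hc, hξge]
    have hb := csInf_le (reg_bddBelow ξ i ht2) ⟨_, hcomp, rfl⟩
    rw [rho_t2 h12] at hb
    exact hb
  have hsd : supDistTuple T ξ ζ ≤ B * (t2 - t1) := by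
    apply Real.sSup_le
    · rintro r ⟨j, u, hu, rfl⟩
      have h1 : ξ j u - ζ j u = |β j| * δ u := by simp only [hξdef]; ring
      rw [h1, abs_of_nonneg (mul_nonneg (abs_nonneg _) (hδ0 u))]
      exact mul_le_mul (hB j) (hδh u) (hδ0 u) hB0
    · exact mul_nonneg hB0 (by linarith)
  have hLip' := hLip ξ ζ hξcad hζcad
  have helem : |regulator T Q ξ i t2 - regulator T Q ζ i t2| ≤
      supDistTuple T (regulator T Q ξ) (regulator T Q ζ) := by
    apply le_csSup
    · refine ⟨∑ j, (B*T) * v j, ?_⟩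
      rintro r ⟨j, u, hu, rfl⟩
      have ha1 : 0 ≤ regulator T Q ξ j u := reg_nonneg ξ j hu
      have ha2 : regulator T Q ξ j u ≤ (B*T) * v j := reg_le_feasible Fx j hu
      have hb1 : 0 ≤ regulator T Q ζ j u := reg_nonneg ζ j hu
      have hb2 : regulator T Q ζ j u ≤ (B*T) * v j := reg_le_feasible Fz j hu
      have hsingle : (B*T) * v j ≤ ∑ j', (B*T) * v j' :=
        Finset.single_le_sum (fun k _ => mul_nonneg hMT (hv0 k)) (Finset.mem_univ j)
      rw [abs_le]; constructor <;> linarith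
    · exact ⟨i, t2, ht2, rfl⟩
  have hfin : K * supDistTuple T ξ ζ ≤ K * (B * (t2 - t1)) :=
    mul_le_mul_of_nonneg_left hsd hK.le
  have hch : |regulator T Q ξ i t2 - regulator T Q ζ i t2| ≤ K * (B * (t2 - t1)) :=
    le_trans helem (le_trans hLip' hfin)
  have habs := abs_le.1 hch
  linarith [step1, habs.1]

end AuxLemmas

/-- If the regulator map `ψ` is `K`-Lipschitz in the uniform metric, then
for every `ζ ∈ ∏ D^{β_i}[0,T]` and every nondecreasing `w : [0,T] → [0,T]` with `w(0) = 0`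
and `w(T) = T`, one has `max_i sup_t |ψ⁽ⁱ⁾(ζ)(w(t)) - ψ⁽ⁱ⁾(ζ)(t)| ≤ K ‖β‖_∞ ‖w - e‖_∞`. -/
theorem regulator_time_deformation_bound
    (T : ℝ) (hT : 0 < T) (d : ℕ) (hd : 0 < d) (β : Fin d → ℝ)
    (Q : Matrix (Fin d) (Fin d) ℝ) (hQ : Substochastic Q)
    (K : ℝ) (hK : 0 < K)
    (hLip : ∀ ξ ζ : Fin d → ℝ → ℝ, (∀ i, Cadlag T (ξ i)) → (∀ i, Cadlag T (ζ i)) →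
      supDistTuple T (regulator T Q ξ) (regulator T Q ζ) ≤ K * supDistTuple T ξ ζ)
    (ζ : Fin d → ℝ → ℝ) (hζ : ∀ i, DBeta T (β i) (ζ i))
    (w : ℝ → ℝ) (hw : MonotoneOn w (Set.Icc 0 T))
    (hwmap : Set.MapsTo w (Set.Icc 0 T) (Set.Icc 0 T))
    (hw0 : w 0 = 0) (hwT : w T = T) :
    supDistTuple T (fun i t => regulator T Q ζ i (w t)) (regulator T Q ζ) ≤
      K * (Finset.univ.sup' (⟨⟨0, hd⟩, Finset.mem_univ _⟩ :
            (Finset.univ : Finset (Fin d)).Nonempty) fun i => |β i|) *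
        supTimeDev T w := by
  obtain ⟨v, hv0, hv1⟩ := exists_dom hd hQ.1 hQ.2.2.2
  set B := (Finset.univ.sup' (⟨⟨0, hd⟩, Finset.mem_univ _⟩ :
      (Finset.univ : Finset (Fin d)).Nonempty) fun i => |β i|) with hBdef
  have hB : ∀ i, |β i| ≤ B := fun i => Finset.le_sup' (fun i => |β i|) (Finset.mem_univ i)
  have hB0 : 0 ≤ B := le_trans (abs_nonneg (β ⟨0, hd⟩)) (hB _)
  have hDbdd : BddAbove {r : ℝ | ∃ t ∈ Set.Icc (0:ℝ) T, r = |w t - t|} := by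
    refine ⟨T, ?_⟩
    rintro r ⟨u, hu, rfl⟩
    have h1 := hwmap hu
    rw [abs_le]
    constructor
    · have := h1.1; have := hu.2; linarith
    · have := h1.2; have := hu.1; linarith
  have hDt : ∀ t ∈ Set.Icc (0:ℝ) T, |w t - t| ≤ supTimeDev T w :=
    fun t ht => le_csSup hDbdd ⟨t, ht, rfl⟩
  have hD0 : 0 ≤ supTimeDev T w := le_trans (abs_nonneg _) (hDt 0 ⟨le_rfl, hT.le⟩)
  have hKB : 0 ≤ K * B := mul_nonneg hK.le hB0
  -- feasible witness for ζ, for monotonicity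
  have hζlb : ∀ j, ∀ u ∈ Set.Icc (0:ℝ) T, -(B * T) ≤ ζ j u := by
    intro j u hu
    have h1 : ζ j 0 - β j * 0 ≤ ζ j u - β j * u := (hζ j).2.2 ⟨le_rfl, hT.le⟩ hu hu.1
    have h2 : 0 ≤ ζ j 0 := (hζ j).2.1
    have h3 : -|β j| ≤ β j := neg_abs_le _
    have h4 : |β j| * u ≤ B * T := mul_le_mul (hB j) hu.2 hu.1 hB0
    nlinarith [mul_le_mul_of_nonneg_right h3 hu.1]
  have Fz : Feasible T Q ζ (fun j _ => (B*T) * v j) :=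
    const_feasible v hv0 hv1 (mul_nonneg hB0 hT.le) hζlb
  apply Real.sSup_le
  · rintro r ⟨i, t, ht, rfl⟩
    have hs := hwmap ht
    have hDev := hDt t ht
    rcases le_total (w t) t with h | h
    · have h1 := reg_increment hT v hv0 hv1 hK hB0 hB hLip hζ i hs.1 h ht.2
      have h2 := reg_mono Fz i hs ht h
      have h3 : |regulator T Q ζ i (w t) - regulator T Q ζ i t|
          = regulator T Q ζ i t - regulator T Q ζ i (w t) := by
        rw [abs_sub_comm, abs_of_nonneg (by linarith)]
      have h4 : |w t - t| = t - w t := by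
        rw [abs_sub_comm, abs_of_nonneg (by linarith)]
      rw [h4] at hDev
      have h5 : K * (B * (t - w t)) ≤ K * B * supTimeDev T w := by
        rw [← mul_assoc]
        exact mul_le_mul_of_nonneg_left hDev hKB
      dsimp only
      rw [h3]
      linarith
    · have h1 := reg_increment hT v hv0 hv1 hK hB0 hB hLip hζ i ht.1 h hs.2
      have h2 := reg_mono Fz i ht hs h
      have h3 : |regulator T Q ζ i (w t) - regulator T Q ζ i t|
          = regulator T Q ζ i (w t) - regulator T Q ζ i t := abs_of_nonneg (by linarith)
      have h4 : |w t - t| = w t - t := abs_of_nonneg (by linarith)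
      rw [h4] at hDev
      have h5 : K * (B * (w t - t)) ≤ K * B * supTimeDev T w := by
        rw [← mul_assoc]
        exact mul_le_mul_of_nonneg_left hDev hKB
      dsimp only
      rw [h3]
      linarith
  · exact mul_nonneg hKB hD0
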